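/- There are exactly 5 quadruples (x1, x2, y1, y2) of positive integers satisfying x1*y1 = x2 + 1 and x2*y2 = x1 + 1, namely (1,1,2,2), (1,2,3,1), (2,1,1,3), (2,3,2,1), and (3,2,1,2). -/
import Mathlib


theorem stmt1 :
    {p : ℕ × ℕ × ℕ × ℕ | 0 < p.1 ∧ 0 < p.2.1 ∧ 0 < p.2.2.1 ∧ 0 < p.2.2.2 ∧
      p.1 * p.2.2.1 = p.2.1 + 1 ∧ p.2.1 * p.2.2.2 = p.1 + 1} =
    {(1, 1, 2, 2), (1, 2, 3, 1), (2, 1, 1, 3), (2, 3, 2, 1), (3, 2, 1, 2)} := by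
  ext ⟨x1, x2, y1, y2⟩
  simp only [Set.mem_setOf_eq, Set.mem_insert_iff, Set.mem_singleton_iff, Prod.mk.injEq]
  constructor
  · rintro ⟨h1, h2, h3, h4, h5, h6⟩
    have hy1 : y1 ≤ 3 := by nlinarith
    have hy2 : y2 ≤ 3 := by nlinarith
    interval_cases y1 <;> interval_cases y2 <;> omega
  · rintro (⟨a, b, c, d⟩ | ⟨a, b, c, d⟩ | ⟨a, b, c, d⟩ | ⟨a, b, c, d⟩ | ⟨a, b, c, d⟩) <;>
      subst a <;> subst b <;> subst c <;> subst d <;> norm_num
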